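/- Let n ≥ 4 be an integer and σ > 0. For λ > 0 define F(λ) = ∫_0^π ( σ² + (n−1)·( 2λ/(1 + λ² + (1 − λ²)·cos θ) )² )^{n/2} · (sin θ)^{n−2} dθ. Then F is twice differentiable at λ = 1 with F'(1) = 0, and F''(1) < 0 if and only if (n−3)·σ² > n−1. In particular, λ = 1 is a strict local maximum of F if and only if σ > √((n−1)/(n−3)). -/

import Mathlib

open Real intervalIntegral MeasureTheory Set Filter Metric
open scoped Topology
namespace S16

noncomputable section

def dd (l c : ℝ) : ℝ := 1 + l ^ 2 + (1 - l ^ 2) * c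

def w0 (l c : ℝ) : ℝ := 2 * l / dd l c
def w1 (l c : ℝ) : ℝ := ((2 + 2 * c) + (-2 + 2 * c) * l ^ 2) / dd l c ^ 2
def w2 (l c : ℝ) : ℝ :=
  ((-12 + 12 * c ^ 2) * l + (4 - 8 * c + 4 * c ^ 2) * l ^ 3) / dd l c ^ 3
def w3 (l c : ℝ) : ℝ :=
  ((-12 - 12 * c + 12 * c ^ 2 + 12 * c ^ 3) + (72 - 72 * c - 72 * c ^ 2 + 72 * c ^ 3) * l ^ 2
    + (-12 + 36 * c - 36 * c ^ 2 + 12 * c ^ 3) * l ^ 4) / dd l c ^ 4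
def w4 (l c : ℝ) : ℝ :=
  ((240 - 480 * c ^ 2 + 240 * c ^ 4) * l + (-480 + 960 * c - 960 * c ^ 3 + 480 * c ^ 4) * l ^ 3
    + (48 - 192 * c + 288 * c ^ 2 - 192 * c ^ 3 + 48 * c ^ 4) * l ^ 5) / dd l c ^ 5

lemma hasDerivAt_dd (l c : ℝ) : HasDerivAt (fun l => dd l c) (2 * l - 2 * l * c) l := by
  have h1 : HasDerivAt (fun l : ℝ => l ^ 2) (2 * l) l := by simpa using hasDerivAt_pow 2 l
  have := ((hasDerivAt_const l (1:ℝ)).add h1).add (((hasDerivAt_const l (1:ℝ)).sub h1).mul_const c)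
  unfold dd
  refine this.congr_deriv ?_
  ring

lemma dd_pos {l : ℝ} (hl : 0 < l) {c : ℝ} (hc : c ∈ Icc (-1:ℝ) 1) : 0 < dd l c := by
  obtain ⟨h1, h2⟩ := hc
  unfold dd
  rcases le_or_gt c 0 with hc0 | hc0
  · nlinarith [mul_pos hl hl]
  · nlinarith [mul_nonneg (sub_nonneg.2 h2) (sq_nonneg l)]

lemma hasDerivAt_w0 {l c : ℝ} (h : dd l c ≠ 0) : HasDerivAt (fun l => w0 l c) (w1 l c) l := by
  have hN : HasDerivAt (fun l : ℝ => 2 * l) (2 * 1) l := (hasDerivAt_id l).const_mul 2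
  have := hN.div (hasDerivAt_dd l c) h
  unfold w0
  refine this.congr_deriv ?_
  unfold w1 dd at *
  field_simp
  ring

lemma hasDerivAt_w1 {l c : ℝ} (h : dd l c ≠ 0) : HasDerivAt (fun l => w1 l c) (w2 l c) l := by
  have h2 : HasDerivAt (fun l : ℝ => l ^ 2) (2 * l) l := by simpa using hasDerivAt_pow 2 l
  have hN := (hasDerivAt_const l ((2:ℝ) + 2 * c)).add (h2.const_mul (-2 + 2 * c))
  have hD : HasDerivAt (fun l => dd l c ^ 2) ((2:ℕ) * dd l c ^ 1 * (2 * l - 2 * l * c)) l :=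
    (hasDerivAt_dd l c).pow 2
  have := hN.div hD (pow_ne_zero 2 h)
  unfold w1
  refine this.congr_deriv ?_
  unfold w2 dd at *
  simp only [Pi.add_apply, Nat.cast_ofNat]
  field_simp
  ring

lemma hasDerivAt_w2 {l c : ℝ} (h : dd l c ≠ 0) : HasDerivAt (fun l => w2 l c) (w3 l c) l := by
  have h1 : HasDerivAt (fun l : ℝ => l) 1 l := hasDerivAt_id l
  have h3 : HasDerivAt (fun l : ℝ => l ^ 3) (3 * l ^ 2) l := by simpa using hasDerivAt_pow 3 l
  have hN := (h1.const_mul ((-12:ℝ) + 12 * c ^ 2)).add (h3.const_mul (4 - 8 * c + 4 * c ^ 2))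
  have hD : HasDerivAt (fun l => dd l c ^ 3) ((3:ℕ) * dd l c ^ 2 * (2 * l - 2 * l * c)) l :=
    (hasDerivAt_dd l c).pow 3
  have := hN.div hD (pow_ne_zero 3 h)
  unfold w2
  refine this.congr_deriv ?_
  unfold w3 dd at *
  simp only [Pi.add_apply, Nat.cast_ofNat]
  field_simp
  ring

lemma hasDerivAt_w3 {l c : ℝ} (h : dd l c ≠ 0) : HasDerivAt (fun l => w3 l c) (w4 l c) l := by
  have h2 : HasDerivAt (fun l : ℝ => l ^ 2) (2 * l) l := by simpa using hasDerivAt_pow 2 l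
  have h4 : HasDerivAt (fun l : ℝ => l ^ 4) (4 * l ^ 3) l := by simpa using hasDerivAt_pow 4 l
  have hN := ((hasDerivAt_const l ((-12:ℝ) - 12 * c + 12 * c ^ 2 + 12 * c ^ 3)).add
      (h2.const_mul (72 - 72 * c - 72 * c ^ 2 + 72 * c ^ 3))).add
      (h4.const_mul (-12 + 36 * c - 36 * c ^ 2 + 12 * c ^ 3))
  have hD : HasDerivAt (fun l => dd l c ^ 4) ((4:ℕ) * dd l c ^ 3 * (2 * l - 2 * l * c)) l :=
    (hasDerivAt_dd l c).pow 4
  have := hN.div hD (pow_ne_zero 4 h)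
  unfold w3
  refine this.congr_deriv ?_
  unfold w4 dd at *
  simp only [Pi.add_apply, Nat.cast_ofNat]
  field_simp
  ring

variable (σ : ℝ) (N : ℝ)

def Bf (σ N x : ℝ) : ℝ := σ ^ 2 + (N - 1) * x ^ 2

def g0 (σ N x : ℝ) : ℝ := Bf σ N x ^ (N / 2)
def g1 (σ N x : ℝ) : ℝ := N * (N - 1) * x * Bf σ N x ^ (N / 2 - 1)
def g2 (σ N x : ℝ) : ℝ :=
  N * (N - 1) * Bf σ N x ^ (N / 2 - 1)
    + N * (N - 2) * (N - 1) ^ 2 * x ^ 2 * Bf σ N x ^ (N / 2 - 2)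
def g3 (σ N x : ℝ) : ℝ :=
  3 * N * (N - 2) * (N - 1) ^ 2 * x * Bf σ N x ^ (N / 2 - 2)
    + N * (N - 2) * (N - 4) * (N - 1) ^ 3 * x ^ 3 * Bf σ N x ^ (N / 2 - 3)
def g4 (σ N x : ℝ) : ℝ :=
  3 * N * (N - 2) * (N - 1) ^ 2 * Bf σ N x ^ (N / 2 - 2)
    + 6 * N * (N - 2) * (N - 4) * (N - 1) ^ 3 * x ^ 2 * Bf σ N x ^ (N / 2 - 3)
    + N * (N - 2) * (N - 4) * (N - 6) * (N - 1) ^ 4 * x ^ 4 * Bf σ N x ^ (N / 2 - 4)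

variable (hσ : σ ≠ 0) (hN : 1 ≤ N)

lemma Bf_pos (hσ : σ ≠ 0) (hN : 1 ≤ N) (x : ℝ) : 0 < Bf σ N x := by
  have := sq_nonneg x
  have h2 : 0 < σ ^ 2 := by positivity
  unfold Bf; nlinarith

lemma hasDerivAt_Bf (x : ℝ) : HasDerivAt (fun x => Bf σ N x) ((N - 1) * (2 * x)) x := by
  have h2 : HasDerivAt (fun x : ℝ => x ^ 2) (2 * x) x := by simpa using hasDerivAt_pow 2 x
  have := (hasDerivAt_const x (σ ^ 2)).add (h2.const_mul (N - 1))
  unfold Bf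
  refine this.congr_deriv ?_
  ring

lemma hasDerivAt_Bpow (hσ : σ ≠ 0) (hN : 1 ≤ N) (q : ℝ) (x : ℝ) :
    HasDerivAt (fun x => Bf σ N x ^ q) ((N - 1) * (2 * x) * q * Bf σ N x ^ (q - 1)) x :=
  (hasDerivAt_Bf σ N x).rpow_const (Or.inl (Bf_pos σ N hσ hN x).ne')

lemma hasDerivAt_g0 (hσ : σ ≠ 0) (hN : 1 ≤ N) (x : ℝ) :
    HasDerivAt (fun x => g0 σ N x) (g1 σ N x) x := by
  have := hasDerivAt_Bpow σ N hσ hN (N / 2) x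
  unfold g0
  convert this using 1
  unfold g1
  rw [show N / 2 - 1 = N / 2 - 1 from rfl]
  ring

lemma hasDerivAt_g1 (hσ : σ ≠ 0) (hN : 1 ≤ N) (x : ℝ) :
    HasDerivAt (fun x => g1 σ N x) (g2 σ N x) x := by
  have hx : HasDerivAt (fun x : ℝ => N * (N - 1) * x) (N * (N - 1) * 1) x :=
    (hasDerivAt_id x).const_mul _
  have := hx.mul (hasDerivAt_Bpow σ N hσ hN (N / 2 - 1) x)
  unfold g1
  refine this.congr_deriv ?_
  unfold g2
  rw [show N / 2 - 1 - 1 = N / 2 - 2 by ring]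
  ring

lemma hasDerivAt_g2 (hσ : σ ≠ 0) (hN : 1 ≤ N) (x : ℝ) :
    HasDerivAt (fun x => g2 σ N x) (g3 σ N x) x := by
  have h2 : HasDerivAt (fun x : ℝ => x ^ 2) (2 * x) x := by simpa using hasDerivAt_pow 2 x
  have ha := (hasDerivAt_Bpow σ N hσ hN (N / 2 - 1) x).const_mul (N * (N - 1))
  have hb := ((h2.const_mul (N * (N - 2) * (N - 1) ^ 2)).mul
    (hasDerivAt_Bpow σ N hσ hN (N / 2 - 2) x))
  have := ha.add hb
  unfold g2
  refine this.congr_deriv ?_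
  unfold g3
  rw [show N / 2 - 1 - 1 = N / 2 - 2 by ring, show N / 2 - 2 - 1 = N / 2 - 3 by ring]
  ring

lemma hasDerivAt_g3 (hσ : σ ≠ 0) (hN : 1 ≤ N) (x : ℝ) :
    HasDerivAt (fun x => g3 σ N x) (g4 σ N x) x := by
  have h1 : HasDerivAt (fun x : ℝ => 3 * N * (N - 2) * (N - 1) ^ 2 * x)
      (3 * N * (N - 2) * (N - 1) ^ 2 * 1) x := (hasDerivAt_id x).const_mul _
  have h3 : HasDerivAt (fun x : ℝ => x ^ 3) (3 * x ^ 2) x := by simpa using hasDerivAt_pow 3 x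
  have ha := h1.mul (hasDerivAt_Bpow σ N hσ hN (N / 2 - 2) x)
  have hb := (h3.const_mul (N * (N - 2) * (N - 4) * (N - 1) ^ 3)).mul
    (hasDerivAt_Bpow σ N hσ hN (N / 2 - 3) x)
  have := ha.add hb
  unfold g3
  refine this.congr_deriv ?_
  unfold g4
  rw [show N / 2 - 2 - 1 = N / 2 - 3 by ring, show N / 2 - 3 - 1 = N / 2 - 4 by ring]
  ring

lemma continuous_g (q : ℝ) (P : ℝ → ℝ) (hP : Continuous P) (hσ : σ ≠ 0) (hN : 1 ≤ N) :
    Continuous (fun x => P x * Bf σ N x ^ q) := by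
  apply hP.mul
  apply Continuous.rpow_const
  · unfold Bf; fun_prop
  · exact fun x => Or.inl (Bf_pos σ N hσ hN x).ne'


-- stage 3 fragment (appended to all.lean for testing)
def ff0 (σ N : ℝ) (m : ℕ) (l θ : ℝ) : ℝ := g0 σ N (w0 l (Real.cos θ)) * Real.sin θ ^ m
def ff1 (σ N : ℝ) (m : ℕ) (l θ : ℝ) : ℝ :=
  g1 σ N (w0 l (Real.cos θ)) * w1 l (Real.cos θ) * Real.sin θ ^ m
def ff2 (σ N : ℝ) (m : ℕ) (l θ : ℝ) : ℝ :=
  (g2 σ N (w0 l (Real.cos θ)) * w1 l (Real.cos θ) ^ 2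
    + g1 σ N (w0 l (Real.cos θ)) * w2 l (Real.cos θ)) * Real.sin θ ^ m
def ff3 (σ N : ℝ) (m : ℕ) (l θ : ℝ) : ℝ :=
  (g3 σ N (w0 l (Real.cos θ)) * w1 l (Real.cos θ) ^ 3
    + 3 * (g2 σ N (w0 l (Real.cos θ)) * w1 l (Real.cos θ) * w2 l (Real.cos θ))
    + g1 σ N (w0 l (Real.cos θ)) * w3 l (Real.cos θ)) * Real.sin θ ^ m
def ff4 (σ N : ℝ) (m : ℕ) (l θ : ℝ) : ℝ :=
  (g4 σ N (w0 l (Real.cos θ)) * w1 l (Real.cos θ) ^ 4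
    + 6 * (g3 σ N (w0 l (Real.cos θ)) * w1 l (Real.cos θ) ^ 2 * w2 l (Real.cos θ))
    + g2 σ N (w0 l (Real.cos θ)) * (3 * w2 l (Real.cos θ) ^ 2
        + 4 * (w1 l (Real.cos θ) * w3 l (Real.cos θ)))
    + g1 σ N (w0 l (Real.cos θ)) * w4 l (Real.cos θ)) * Real.sin θ ^ m

lemma dd_cos_ne {l : ℝ} (hl : 0 < l) (θ : ℝ) : dd l (Real.cos θ) ≠ 0 :=
  (dd_pos hl ⟨Real.neg_one_le_cos θ, Real.cos_le_one θ⟩).ne'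

section derivs
variable {σ N : ℝ} {l : ℝ}

lemma hasDerivAt_ff0 (hσ : σ ≠ 0) (hN : 1 ≤ N) (m : ℕ) (hl : 0 < l) (θ : ℝ) : HasDerivAt (fun l => ff0 σ N m l θ) (ff1 σ N m l θ) l := by
  have h := dd_cos_ne hl θ
  have H := ((hasDerivAt_g0 σ N hσ hN (w0 l (Real.cos θ))).comp l
    (hasDerivAt_w0 h)).mul_const (Real.sin θ ^ m)
  simp only [Function.comp_def] at H
  unfold ff0 ff1
  convert H using 1

lemma hasDerivAt_ff1 (hσ : σ ≠ 0) (hN : 1 ≤ N) (m : ℕ) (hl : 0 < l) (θ : ℝ) : HasDerivAt (fun l => ff1 σ N m l θ) (ff2 σ N m l θ) l := by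
  have h := dd_cos_ne hl θ
  have H := (((hasDerivAt_g1 σ N hσ hN (w0 l (Real.cos θ))).comp l
    (hasDerivAt_w0 h)).mul (hasDerivAt_w1 h)).mul_const (Real.sin θ ^ m)
  simp only [Function.comp_def] at H
  unfold ff1
  refine H.congr_deriv ?_
  unfold ff2; ring

lemma hasDerivAt_ff2 (hσ : σ ≠ 0) (hN : 1 ≤ N) (m : ℕ) (hl : 0 < l) (θ : ℝ) : HasDerivAt (fun l => ff2 σ N m l θ) (ff3 σ N m l θ) l := by
  have h := dd_cos_ne hl θ
  have hA := ((hasDerivAt_g2 σ N hσ hN (w0 l (Real.cos θ))).comp l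
    (hasDerivAt_w0 h)).mul ((hasDerivAt_w1 h).pow 2)
  have hB := ((hasDerivAt_g1 σ N hσ hN (w0 l (Real.cos θ))).comp l
    (hasDerivAt_w0 h)).mul (hasDerivAt_w2 h)
  have H := (hA.add hB).mul_const (Real.sin θ ^ m)
  simp only [Function.comp_def] at H
  unfold ff2
  refine H.congr_deriv ?_
  simp only [Pi.pow_apply, Pi.mul_apply, Pi.add_apply]
  unfold ff3; push_cast; ring

lemma hasDerivAt_ff3 (hσ : σ ≠ 0) (hN : 1 ≤ N) (m : ℕ) (hl : 0 < l) (θ : ℝ) : HasDerivAt (fun l => ff3 σ N m l θ) (ff4 σ N m l θ) l := by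
  have h := dd_cos_ne hl θ
  have hA := ((hasDerivAt_g3 σ N hσ hN (w0 l (Real.cos θ))).comp l
    (hasDerivAt_w0 h)).mul ((hasDerivAt_w1 h).pow 3)
  have hB := ((((hasDerivAt_g2 σ N hσ hN (w0 l (Real.cos θ))).comp l
    (hasDerivAt_w0 h)).mul (hasDerivAt_w1 h)).mul (hasDerivAt_w2 h)).const_mul (3:ℝ)
  have hC := ((hasDerivAt_g1 σ N hσ hN (w0 l (Real.cos θ))).comp l
    (hasDerivAt_w0 h)).mul (hasDerivAt_w3 h)
  have H := ((hA.add hB).add hC).mul_const (Real.sin θ ^ m)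
  simp only [Function.comp_def] at H
  unfold ff3
  refine H.congr_deriv ?_
  simp only [Pi.pow_apply, Pi.mul_apply, Pi.add_apply]
  unfold ff4; push_cast; ring

end derivs



def KK : Set (ℝ × ℝ) := Icc (1/2 : ℝ) (3/2) ×ˢ Icc 0 π

lemma dd_ne_KK : ∀ q ∈ KK, dd q.1 (Real.cos q.2) ≠ 0 := by
  rintro ⟨l, θ⟩ ⟨⟨hl, _⟩, _⟩
  exact dd_cos_ne (by norm_num at hl ⊢; linarith) θ

lemma contOn_dd : Continuous (fun q : ℝ × ℝ => dd q.1 (Real.cos q.2)) := by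
  unfold dd; fun_prop

section cont
variable {σ N : ℝ}

lemma contOn_w0 : ContinuousOn (fun q : ℝ × ℝ => w0 q.1 (Real.cos q.2)) KK := by
  unfold w0
  exact ContinuousOn.div (by fun_prop) contOn_dd.continuousOn dd_ne_KK

lemma contOn_w1 : ContinuousOn (fun q : ℝ × ℝ => w1 q.1 (Real.cos q.2)) KK := by
  unfold w1
  exact ContinuousOn.div (by fun_prop) (contOn_dd.pow 2).continuousOn
    (fun q hq => pow_ne_zero 2 (dd_ne_KK q hq))

lemma contOn_w2 : ContinuousOn (fun q : ℝ × ℝ => w2 q.1 (Real.cos q.2)) KK := by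
  unfold w2
  exact ContinuousOn.div (by fun_prop) (contOn_dd.pow 3).continuousOn
    (fun q hq => pow_ne_zero 3 (dd_ne_KK q hq))

lemma contOn_w3 : ContinuousOn (fun q : ℝ × ℝ => w3 q.1 (Real.cos q.2)) KK := by
  unfold w3
  exact ContinuousOn.div (by fun_prop) (contOn_dd.pow 4).continuousOn
    (fun q hq => pow_ne_zero 4 (dd_ne_KK q hq))

lemma contOn_w4 : ContinuousOn (fun q : ℝ × ℝ => w4 q.1 (Real.cos q.2)) KK := by
  unfold w4
  exact ContinuousOn.div (by fun_prop) (contOn_dd.pow 5).continuousOn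
    (fun q hq => pow_ne_zero 5 (dd_ne_KK q hq))

lemma continuous_g0 (hσ : σ ≠ 0) (hN : 1 ≤ N) : Continuous (g0 σ N) := by
  have := continuous_g σ N (N / 2) (fun _ => 1) continuous_const hσ hN
  unfold g0; simpa using this

lemma continuous_g1 (hσ : σ ≠ 0) (hN : 1 ≤ N) : Continuous (g1 σ N) := by
  have := continuous_g σ N (N / 2 - 1) (fun x => N * (N - 1) * x) (by fun_prop) hσ hN
  unfold g1; exact this

lemma continuous_g2 (hσ : σ ≠ 0) (hN : 1 ≤ N) : Continuous (g2 σ N) := by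
  have h1 := continuous_g σ N (N / 2 - 1) (fun _ => N * (N - 1)) continuous_const hσ hN
  have h2 := continuous_g σ N (N / 2 - 2) (fun x => N * (N - 2) * (N - 1) ^ 2 * x ^ 2)
    (by fun_prop) hσ hN
  unfold g2; exact h1.add h2

lemma continuous_g3 (hσ : σ ≠ 0) (hN : 1 ≤ N) : Continuous (g3 σ N) := by
  have h1 := continuous_g σ N (N / 2 - 2) (fun x => 3 * N * (N - 2) * (N - 1) ^ 2 * x)
    (by fun_prop) hσ hN
  have h2 := continuous_g σ N (N / 2 - 3) (fun x => N * (N - 2) * (N - 4) * (N - 1) ^ 3 * x ^ 3)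
    (by fun_prop) hσ hN
  unfold g3; exact h1.add h2

lemma continuous_g4 (hσ : σ ≠ 0) (hN : 1 ≤ N) : Continuous (g4 σ N) := by
  have h1 := continuous_g σ N (N / 2 - 2) (fun _ => 3 * N * (N - 2) * (N - 1) ^ 2)
    continuous_const hσ hN
  have h2 := continuous_g σ N (N / 2 - 3) (fun x => 6 * N * (N - 2) * (N - 4) * (N - 1) ^ 3 * x ^ 2)
    (by fun_prop) hσ hN
  have h3 := continuous_g σ N (N / 2 - 4)
    (fun x => N * (N - 2) * (N - 4) * (N - 6) * (N - 1) ^ 4 * x ^ 4) (by fun_prop) hσ hN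
  unfold g4; exact (h1.add h2).add h3

lemma contOn_ff0 (hσ : σ ≠ 0) (hN : 1 ≤ N) (m : ℕ) :
    ContinuousOn (fun q : ℝ × ℝ => ff0 σ N m q.1 q.2) KK := by
  unfold ff0
  exact (((continuous_g0 hσ hN).comp_continuousOn contOn_w0).mul (by fun_prop))

lemma contOn_ff1 (hσ : σ ≠ 0) (hN : 1 ≤ N) (m : ℕ) :
    ContinuousOn (fun q : ℝ × ℝ => ff1 σ N m q.1 q.2) KK := by
  unfold ff1
  exact ((((continuous_g1 hσ hN).comp_continuousOn contOn_w0).mul contOn_w1).mul (by fun_prop))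

lemma contOn_ff2 (hσ : σ ≠ 0) (hN : 1 ≤ N) (m : ℕ) :
    ContinuousOn (fun q : ℝ × ℝ => ff2 σ N m q.1 q.2) KK := by
  unfold ff2
  exact ((((continuous_g2 hσ hN).comp_continuousOn contOn_w0).mul (contOn_w1.pow 2)).add
    (((continuous_g1 hσ hN).comp_continuousOn contOn_w0).mul contOn_w2)).mul (by fun_prop)

lemma contOn_ff3 (hσ : σ ≠ 0) (hN : 1 ≤ N) (m : ℕ) :
    ContinuousOn (fun q : ℝ × ℝ => ff3 σ N m q.1 q.2) KK := by
  unfold ff3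
  refine ContinuousOn.mul ?_ (by fun_prop)
  refine ContinuousOn.add (ContinuousOn.add ?_ ?_) ?_
  · exact ((continuous_g3 hσ hN).comp_continuousOn contOn_w0).mul (contOn_w1.pow 3)
  · exact continuousOn_const.mul ((((continuous_g2 hσ hN).comp_continuousOn contOn_w0).mul contOn_w1).mul
      contOn_w2)
  · exact ((continuous_g1 hσ hN).comp_continuousOn contOn_w0).mul contOn_w3

lemma contOn_ff4 (hσ : σ ≠ 0) (hN : 1 ≤ N) (m : ℕ) :
    ContinuousOn (fun q : ℝ × ℝ => ff4 σ N m q.1 q.2) KK := by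
  unfold ff4
  refine ContinuousOn.mul ?_ (by fun_prop)
  refine (((?_ : ContinuousOn _ KK).add ?_).add ?_).add ?_
  · exact ((continuous_g4 hσ hN).comp_continuousOn contOn_w0).mul (contOn_w1.pow 4)
  · exact continuousOn_const.mul ((((continuous_g3 hσ hN).comp_continuousOn contOn_w0).mul
      (contOn_w1.pow 2)).mul contOn_w2)
  · exact ((continuous_g2 hσ hN).comp_continuousOn contOn_w0).mul
      ((continuousOn_const.mul (contOn_w2.pow 2)).add
        (continuousOn_const.mul (contOn_w1.mul contOn_w3)))
  · exact ((continuous_g1 hσ hN).comp_continuousOn contOn_w0).mul contOn_w4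

end cont

/-- differentiation under the interval integral -/
lemma step (g g' : ℝ → ℝ → ℝ)
    (hg : ContinuousOn (fun q : ℝ × ℝ => g q.1 q.2) KK)
    (hg' : ContinuousOn (fun q : ℝ × ℝ => g' q.1 q.2) KK)
    (hdiff : ∀ l : ℝ, 1/2 < l → l < 3/2 → ∀ θ : ℝ, HasDerivAt (fun l => g l θ) (g' l θ) l)
    {x₀ : ℝ} (hx : x₀ ∈ ball (1:ℝ) 4⁻¹) :
    HasDerivAt (fun l => ∫ θ in (0:ℝ)..π, g l θ) (∫ θ in (0:ℝ)..π, g' x₀ θ) x₀ := by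
  have hπ : (0:ℝ) ≤ π := pi_pos.le
  have hx' : |x₀ - 1| < 4⁻¹ := by rwa [mem_ball, Real.dist_eq] at hx
  have hstrict : ∀ y ∈ ball x₀ 4⁻¹, 1/2 < y ∧ y < 3/2 := by
    intro y hy
    rw [mem_ball, Real.dist_eq] at hy
    have h1 := abs_lt.mp hx'
    have h2 := abs_lt.mp hy
    exact ⟨by linarith [h1.1, h2.1], by linarith [h1.2, h2.2]⟩
  have hball : ∀ y ∈ ball x₀ 4⁻¹, y ∈ Icc (1/2 : ℝ) (3/2) := fun y hy =>
    ⟨(hstrict y hy).1.le, (hstrict y hy).2.le⟩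
  have hmeas : ∀ x ∈ Icc (1/2 : ℝ) (3/2),
      AEStronglyMeasurable (g x) (MeasureTheory.volume.restrict (Set.uIoc (0:ℝ) π)) := by
    intro x hxm
    have hc : ContinuousOn (fun θ => g x θ) (Icc 0 π) := by
      have : ContinuousOn (fun θ : ℝ => ((x, θ) : ℝ × ℝ)) (Icc 0 π) := by fun_prop
      exact hg.comp this (fun θ hθ => ⟨hxm, hθ⟩)
    rw [uIoc_of_le hπ]
    exact (hc.mono Ioc_subset_Icc_self).aestronglyMeasurable measurableSet_Ioc
  have hmeas' : ∀ x ∈ Icc (1/2 : ℝ) (3/2),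
      AEStronglyMeasurable (g' x) (MeasureTheory.volume.restrict (Set.uIoc (0:ℝ) π)) := by
    intro x hxm
    have hc : ContinuousOn (fun θ => g' x θ) (Icc 0 π) := by
      have : ContinuousOn (fun θ : ℝ => ((x, θ) : ℝ × ℝ)) (Icc 0 π) := by fun_prop
      exact hg'.comp this (fun θ hθ => ⟨hxm, hθ⟩)
    rw [uIoc_of_le hπ]
    exact (hc.mono Ioc_subset_Icc_self).aestronglyMeasurable measurableSet_Ioc
  have hx₀K : x₀ ∈ Icc (1/2 : ℝ) (3/2) := hball x₀ (mem_ball_self (by norm_num))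
  obtain ⟨C, hC⟩ := (isCompact_Icc.prod isCompact_Icc).exists_bound_of_continuousOn hg'
  have key := intervalIntegral.hasDerivAt_integral_of_dominated_loc_of_deriv_le
    (F := g) (F' := g') (x₀ := x₀) (a := (0:ℝ)) (b := π) (μ := MeasureTheory.volume)
    (bound := fun _ => C) (s := ball x₀ 4⁻¹) (Metric.ball_mem_nhds x₀ (by norm_num))
    (Filter.eventually_of_mem (Metric.ball_mem_nhds x₀ (by norm_num))
      (fun x hxb => hmeas x (hball x hxb)))
    ?_ (hmeas' x₀ hx₀K) ?_ ?_ ?_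
  · exact key.2
  · -- integrability of g x₀
    have hc : ContinuousOn (fun θ => g x₀ θ) (Icc 0 π) := by
      have : ContinuousOn (fun θ : ℝ => ((x₀, θ) : ℝ × ℝ)) (Icc 0 π) := by fun_prop
      exact hg.comp this (fun θ hθ => ⟨hx₀K, hθ⟩)
    apply ContinuousOn.intervalIntegrable
    rwa [uIcc_of_le hπ]
  · -- bound
    refine MeasureTheory.ae_of_all _ (fun t ht x hxb => ?_)
    rw [uIoc_of_le hπ] at ht
    exact hC (x, t) ⟨hball x hxb, Ioc_subset_Icc_self ht⟩
  · exact intervalIntegrable_const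
  · refine MeasureTheory.ae_of_all _ (fun t ht x hxb => ?_)
    exact hdiff x (hstrict x hxb).1 (hstrict x hxb).2 t


lemma wallis_step (k : ℕ) :
    ∫ θ in (0:ℝ)..π, Real.sin θ ^ (k + 2)
      = ((k:ℝ) + 1) / ((k:ℝ) + 2) * ∫ θ in (0:ℝ)..π, Real.sin θ ^ k := by
  have := integral_sin_pow (a := 0) (b := π) k
  simpa [Real.sin_zero, Real.sin_pi, zero_pow, Nat.succ_ne_zero] using this

lemma cos_sin_zero (k : ℕ) :
    ∫ θ in (0:ℝ)..π, Real.cos θ * Real.sin θ ^ (k + 1) = 0 := by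
  have hd : ∀ θ ∈ uIcc (0:ℝ) π,
      HasDerivAt (fun θ : ℝ => Real.sin θ ^ (k + 2) / ((k:ℝ) + 2))
        (Real.cos θ * Real.sin θ ^ (k + 1)) θ := by
    intro θ _
    have := ((Real.hasDerivAt_sin θ).pow (k + 2)).div_const ((k:ℝ) + 2)
    refine this.congr_deriv ?_
    have hk : ((k:ℝ) + 2) ≠ 0 := by positivity
    rw [show k + 2 - 1 = k + 1 by omega]; push_cast
    field_simp
  have hi : IntervalIntegrable (fun θ : ℝ => Real.cos θ * Real.sin θ ^ (k + 1))
      MeasureTheory.volume 0 π := by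
    apply Continuous.intervalIntegrable; fun_prop
  have := intervalIntegral.integral_eq_sub_of_hasDerivAt hd hi
  simpa [Real.sin_pi, Real.sin_zero, zero_pow, Nat.succ_ne_zero] using this

/-- the basic moment computation -/
lemma poly_integral (j : ℕ) (a0 a1 a2 a3 a4 : ℝ) :
    ∫ θ in (0:ℝ)..π,
        (a0 + a1 * Real.cos θ + a2 * Real.cos θ ^ 2 + a3 * Real.cos θ ^ 3
          + a4 * Real.cos θ ^ 4) * Real.sin θ ^ (j + 1)
      = (a0 + a2 / ((j:ℝ) + 3) + 3 * a4 / (((j:ℝ) + 3) * ((j:ℝ) + 5)))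
          * ∫ θ in (0:ℝ)..π, Real.sin θ ^ (j + 1) := by
  have hpt : ∀ θ : ℝ,
      (a0 + a1 * Real.cos θ + a2 * Real.cos θ ^ 2 + a3 * Real.cos θ ^ 3
          + a4 * Real.cos θ ^ 4) * Real.sin θ ^ (j + 1)
      = ((a0 + a2 + a4) * Real.sin θ ^ (j + 1) + (-a2 - 2 * a4) * Real.sin θ ^ (j + 3)
          + a4 * Real.sin θ ^ (j + 5))
        + ((a1 + a3) * (Real.cos θ * Real.sin θ ^ (j + 1))
          + (-a3) * (Real.cos θ * Real.sin θ ^ (j + 3))) := by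
    intro θ
    have h := Real.sin_sq_add_cos_sq θ
    have e1 : Real.sin θ ^ (j + 3) = Real.sin θ ^ (j + 1) * Real.sin θ ^ 2 := by ring
    have e2 : Real.sin θ ^ (j + 5) = Real.sin θ ^ (j + 1) * Real.sin θ ^ 4 := by ring
    rw [e1, e2]
    linear_combination (a2 + a3 * Real.cos θ
      + a4 * (Real.cos θ ^ 2 + 1 - Real.sin θ ^ 2)) * Real.sin θ ^ (j + 1) * h
  rw [intervalIntegral.integral_congr (fun θ _ => hpt θ)]
  have i1 : IntervalIntegrable (fun θ : ℝ => (a0 + a2 + a4) * Real.sin θ ^ (j + 1))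
      MeasureTheory.volume 0 π := by apply Continuous.intervalIntegrable; fun_prop
  have i2 : IntervalIntegrable (fun θ : ℝ => (-a2 - 2 * a4) * Real.sin θ ^ (j + 3))
      MeasureTheory.volume 0 π := by apply Continuous.intervalIntegrable; fun_prop
  have i3 : IntervalIntegrable (fun θ : ℝ => a4 * Real.sin θ ^ (j + 5))
      MeasureTheory.volume 0 π := by apply Continuous.intervalIntegrable; fun_prop
  have i4 : IntervalIntegrable (fun θ : ℝ => (a1 + a3) * (Real.cos θ * Real.sin θ ^ (j + 1)))
      MeasureTheory.volume 0 π := by apply Continuous.intervalIntegrable; fun_prop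
  have i5 : IntervalIntegrable (fun θ : ℝ => (-a3) * (Real.cos θ * Real.sin θ ^ (j + 3)))
      MeasureTheory.volume 0 π := by apply Continuous.intervalIntegrable; fun_prop
  rw [intervalIntegral.integral_add (((i1.add i2).add i3)) (i4.add i5),
    intervalIntegral.integral_add (i1.add i2) i3,
    intervalIntegral.integral_add i1 i2,
    intervalIntegral.integral_add i4 i5,
    intervalIntegral.integral_const_mul, intervalIntegral.integral_const_mul,
    intervalIntegral.integral_const_mul, intervalIntegral.integral_const_mul,
    intervalIntegral.integral_const_mul]
  rw [cos_sin_zero j, show j + 3 = (j + 2) + 1 by ring, cos_sin_zero (j + 2)]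
  rw [show j + 2 + 1 + 2 = j + 5 from rfl] -- no-op guard
  have w1 : ∫ θ in (0:ℝ)..π, Real.sin θ ^ (j + 3)
      = ((j:ℝ) + 2) / ((j:ℝ) + 3) * ∫ θ in (0:ℝ)..π, Real.sin θ ^ (j + 1) := by
    have := wallis_step (j + 1)
    rw [show j + 1 + 2 = j + 3 from rfl] at this
    convert this using 3 <;> push_cast <;> ring
  have w2 : ∫ θ in (0:ℝ)..π, Real.sin θ ^ (j + 5)
      = ((j:ℝ) + 4) / ((j:ℝ) + 5) * ∫ θ in (0:ℝ)..π, Real.sin θ ^ (j + 3) := by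
    have := wallis_step (j + 3)
    rw [show j + 3 + 2 = j + 5 from rfl] at this
    convert this using 3 <;> push_cast <;> ring
  rw [w2, w1]
  have h3 : ((j:ℝ) + 3) ≠ 0 := by positivity
  have h5 : ((j:ℝ) + 5) ≠ 0 := by positivity
  field_simp
  ring


lemma dd_one (c : ℝ) : dd 1 c = 2 := by unfold dd; ring
lemma w0_one (c : ℝ) : w0 1 c = 1 := by unfold w0; rw [dd_one]; norm_num
lemma w1_one (c : ℝ) : w1 1 c = c := by unfold w1; rw [dd_one]; ring
lemma w2_one (c : ℝ) : w2 1 c = 2 * c ^ 2 - c - 1 := by unfold w2; rw [dd_one]; ring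
lemma w3_one (c : ℝ) : w3 1 c = 6 * c ^ 3 - 6 * c ^ 2 - 3 * c + 3 := by
  unfold w3; rw [dd_one]; ring
lemma w4_one (c : ℝ) : w4 1 c = 24 * c ^ 4 - 36 * c ^ 3 - 6 * c ^ 2 + 24 * c - 6 := by
  unfold w4; rw [dd_one]; ring

section evalone
variable (σ N : ℝ) (j : ℕ)

lemma phi1_one : ∫ θ in (0:ℝ)..π, ff1 σ N (j + 1) 1 θ = 0 := by
  have hpt : ∀ θ : ℝ, ff1 σ N (j + 1) 1 θ
      = (0 + g1 σ N 1 * Real.cos θ + 0 * Real.cos θ ^ 2 + 0 * Real.cos θ ^ 3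
          + 0 * Real.cos θ ^ 4) * Real.sin θ ^ (j + 1) := by
    intro θ; unfold ff1; rw [w0_one, w1_one]; ring
  rw [intervalIntegral.integral_congr (fun θ _ => hpt θ), poly_integral]
  norm_num

lemma phi2_one : ∫ θ in (0:ℝ)..π, ff2 σ N (j + 1) 1 θ
    = (-g1 σ N 1 + (g2 σ N 1 + 2 * g1 σ N 1) / ((j:ℝ) + 3))
        * ∫ θ in (0:ℝ)..π, Real.sin θ ^ (j + 1) := by
  have hpt : ∀ θ : ℝ, ff2 σ N (j + 1) 1 θ
      = (-g1 σ N 1 + -g1 σ N 1 * Real.cos θ + (g2 σ N 1 + 2 * g1 σ N 1) * Real.cos θ ^ 2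
          + 0 * Real.cos θ ^ 3 + 0 * Real.cos θ ^ 4) * Real.sin θ ^ (j + 1) := by
    intro θ; unfold ff2; rw [w0_one, w1_one, w2_one]; ring
  rw [intervalIntegral.integral_congr (fun θ _ => hpt θ), poly_integral]
  norm_num

lemma phi3_one : ∫ θ in (0:ℝ)..π, ff3 σ N (j + 1) 1 θ
    = (3 * g1 σ N 1 + (-3 * g2 σ N 1 - 6 * g1 σ N 1) / ((j:ℝ) + 3))
        * ∫ θ in (0:ℝ)..π, Real.sin θ ^ (j + 1) := by
  have hpt : ∀ θ : ℝ, ff3 σ N (j + 1) 1 θ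
      = (3 * g1 σ N 1 + (-3 * g2 σ N 1 - 3 * g1 σ N 1) * Real.cos θ
          + (-3 * g2 σ N 1 - 6 * g1 σ N 1) * Real.cos θ ^ 2
          + (g3 σ N 1 + 6 * g2 σ N 1 + 6 * g1 σ N 1) * Real.cos θ ^ 3
          + 0 * Real.cos θ ^ 4) * Real.sin θ ^ (j + 1) := by
    intro θ; unfold ff3; rw [w0_one, w1_one, w2_one, w3_one]; ring
  rw [intervalIntegral.integral_congr (fun θ _ => hpt θ), poly_integral]
  norm_num

lemma phi4_one : ∫ θ in (0:ℝ)..π, ff4 σ N (j + 1) 1 θ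
    = ((3 * g2 σ N 1 - 6 * g1 σ N 1)
        + (-6 * g3 σ N 1 - 21 * g2 σ N 1 - 6 * g1 σ N 1) / ((j:ℝ) + 3)
        + 3 * (g4 σ N 1 + 12 * g3 σ N 1 + 36 * g2 σ N 1 + 24 * g1 σ N 1)
            / (((j:ℝ) + 3) * ((j:ℝ) + 5)))
        * ∫ θ in (0:ℝ)..π, Real.sin θ ^ (j + 1) := by
  have hpt : ∀ θ : ℝ, ff4 σ N (j + 1) 1 θ
      = ((3 * g2 σ N 1 - 6 * g1 σ N 1)
          + (18 * g2 σ N 1 + 24 * g1 σ N 1) * Real.cos θ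
          + (-6 * g3 σ N 1 - 21 * g2 σ N 1 - 6 * g1 σ N 1) * Real.cos θ ^ 2
          + (-6 * g3 σ N 1 - 36 * g2 σ N 1 - 36 * g1 σ N 1) * Real.cos θ ^ 3
          + (g4 σ N 1 + 12 * g3 σ N 1 + 36 * g2 σ N 1 + 24 * g1 σ N 1) * Real.cos θ ^ 4)
          * Real.sin θ ^ (j + 1) := by
    intro θ; unfold ff4; rw [w0_one, w1_one, w2_one, w3_one, w4_one]; ring
  rw [intervalIntegral.integral_congr (fun θ _ => hpt θ), poly_integral]

lemma Bf_one : Bf σ N 1 = σ ^ 2 + (N - 1) := by unfold Bf; ring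

lemma g1_one : g1 σ N 1 = N * (N - 1) * (σ ^ 2 + (N - 1)) ^ (N / 2 - 1) := by
  unfold g1; rw [Bf_one]; ring
lemma g2_one : g2 σ N 1 = N * (N - 1) * (σ ^ 2 + (N - 1)) ^ (N / 2 - 1)
    + N * (N - 2) * (N - 1) ^ 2 * (σ ^ 2 + (N - 1)) ^ (N / 2 - 2) := by
  unfold g2; rw [Bf_one]; ring
lemma g3_one : g3 σ N 1 = 3 * N * (N - 2) * (N - 1) ^ 2 * (σ ^ 2 + (N - 1)) ^ (N / 2 - 2)
    + N * (N - 2) * (N - 4) * (N - 1) ^ 3 * (σ ^ 2 + (N - 1)) ^ (N / 2 - 3) := by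
  unfold g3; rw [Bf_one]; ring
lemma g4_one : g4 σ N 1 = 3 * N * (N - 2) * (N - 1) ^ 2 * (σ ^ 2 + (N - 1)) ^ (N / 2 - 2)
    + 6 * N * (N - 2) * (N - 4) * (N - 1) ^ 3 * (σ ^ 2 + (N - 1)) ^ (N / 2 - 3)
    + N * (N - 2) * (N - 4) * (N - 6) * (N - 1) ^ 4 * (σ ^ 2 + (N - 1)) ^ (N / 2 - 4) := by
  unfold g4; rw [Bf_one]; ring

end evalone


section helpers
variable {φ ψ : ℝ → ℝ} {d : ℝ}

lemma ev_pos_right (h : HasDerivAt φ d 1) (h0 : φ 1 = 0) (hd : 0 < d) :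
    ∀ᶠ x in 𝓝[>] (1:ℝ), 0 < φ x := by
  have ht : Filter.Tendsto (slope φ 1) (𝓝[≠] 1) (𝓝 d) := hasDerivAt_iff_tendsto_slope.mp h
  have h1 : ∀ᶠ x in 𝓝[≠] (1:ℝ), 0 < slope φ 1 x := ht.eventually_const_lt hd
  have h2 : ∀ᶠ x in 𝓝[>] (1:ℝ), 0 < slope φ 1 x :=
    h1.filter_mono (nhdsWithin_mono _ (fun x hx => ne_of_gt hx))
  filter_upwards [h2, self_mem_nhdsWithin] with x hs hx
  rw [Set.mem_Ioi] at hx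
  have hne : x - 1 ≠ 0 := sub_ne_zero.2 (ne_of_gt hx)
  rw [slope_def_field, h0, sub_zero] at hs
  have := mul_pos hs (sub_pos.2 hx)
  rwa [div_mul_cancel₀ _ hne] at this

lemma ev_neg_right (h : HasDerivAt φ d 1) (h0 : φ 1 = 0) (hd : d < 0) :
    ∀ᶠ x in 𝓝[>] (1:ℝ), φ x < 0 := by
  have := ev_pos_right (d := -d) (φ := fun x => -φ x) (h.neg) (by simp [h0]) (by linarith)
  filter_upwards [this] with x hx
  simpa using hx

lemma ev_pos_left (h : HasDerivAt φ d 1) (h0 : φ 1 = 0) (hd : d < 0) :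
    ∀ᶠ x in 𝓝[<] (1:ℝ), 0 < φ x := by
  have ht : Filter.Tendsto (slope φ 1) (𝓝[≠] 1) (𝓝 d) := hasDerivAt_iff_tendsto_slope.mp h
  have h1 : ∀ᶠ x in 𝓝[≠] (1:ℝ), slope φ 1 x < 0 := ht.eventually_lt_const hd
  have h2 : ∀ᶠ x in 𝓝[<] (1:ℝ), slope φ 1 x < 0 :=
    h1.filter_mono (nhdsWithin_mono _ (fun x hx => ne_of_lt hx))
  filter_upwards [h2, self_mem_nhdsWithin] with x hs hx
  rw [Set.mem_Iio] at hx
  have hne : x - 1 ≠ 0 := sub_ne_zero.2 (ne_of_lt hx)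
  rw [slope_def_field, h0, sub_zero] at hs
  have := mul_pos_of_neg_of_neg hs (by linarith : x - 1 < 0)
  rwa [div_mul_cancel₀ _ hne] at this

lemma strictMonoOn_Icc {a b : ℝ} (hab : a < b)
    (hder : ∀ x ∈ Icc a b, HasDerivAt φ (ψ x) x) (hpos : ∀ x ∈ Ioo a b, 0 < ψ x) :
    StrictMonoOn φ (Icc a b) := by
  apply strictMonoOn_of_hasDerivWithinAt_pos (convex_Icc a b)
    (fun x hx => (hder x hx).continuousAt.continuousWithinAt) (f' := ψ)
  · intro x hx
    rw [interior_Icc] at hx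
    exact (hder x (Ioo_subset_Icc_self hx)).hasDerivWithinAt
  · intro x hx
    rw [interior_Icc] at hx
    exact hpos x hx

lemma strictAntiOn_Icc {a b : ℝ} (hab : a < b)
    (hder : ∀ x ∈ Icc a b, HasDerivAt φ (ψ x) x) (hneg : ∀ x ∈ Ioo a b, ψ x < 0) :
    StrictAntiOn φ (Icc a b) := by
  apply strictAntiOn_of_hasDerivWithinAt_neg (convex_Icc a b)
    (fun x hx => (hder x hx).continuousAt.continuousWithinAt) (f' := ψ)
  · intro x hx
    rw [interior_Icc] at hx
    exact (hder x (Ioo_subset_Icc_self hx)).hasDerivWithinAt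
  · intro x hx
    rw [interior_Icc] at hx
    exact hneg x hx

end helpers


end
end S16

open S16 Real Set Filter Metric MeasureTheory intervalIntegral
open scoped Topology

set_option maxHeartbeats 3200000 in
/-- For an integer `n ≥ 4` and `σ > 0`, the second-variation function
`F(λ) = ∫_0^π (σ² + (n-1)(2λ/(1 + λ² + (1-λ²)cos θ))²)^{n/2} (sin θ)^{n-2} dθ`
is twice differentiable at `λ = 1` with `F'(1) = 0`, `F''(1) < 0 ↔ (n-3)σ² > n-1`,
and `λ = 1` is a strict local maximum of `F` iff `σ > √((n-1)/(n-3))`. -/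
theorem stmt16 (n : ℕ) (hn : 4 ≤ n) (σ : ℝ) (hσ : 0 < σ)
    (F : ℝ → ℝ)
    (hF : ∀ lam > (0:ℝ), F lam = ∫ θ in (0:ℝ)..Real.pi,
        (σ ^ 2 + ((n : ℝ) - 1) * (2 * lam / (1 + lam ^ 2 + (1 - lam ^ 2) * Real.cos θ)) ^ 2)
            ^ ((n : ℝ) / 2) * Real.sin θ ^ (n - 2)) :
    ∃ F' : ℝ → ℝ,
      (∀ᶠ lam in nhds (1:ℝ), HasDerivAt F (F' lam) lam) ∧ F' 1 = 0 ∧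
      (∃ d2 : ℝ, HasDerivAt F' d2 1 ∧ (d2 < 0 ↔ ((n : ℝ) - 3) * σ ^ 2 > (n : ℝ) - 1)) ∧
      ((∀ᶠ lam in nhdsWithin (1:ℝ) {(1:ℝ)}ᶜ, F lam < F 1)
        ↔ Real.sqrt (((n : ℝ) - 1) / ((n : ℝ) - 3)) < σ) := by
  have hσ0 : σ ≠ 0 := ne_of_gt hσ
  have hN4 : (4:ℝ) ≤ (n:ℝ) := by exact_mod_cast hn
  have hN1 : (1:ℝ) ≤ (n:ℝ) := by linarith
  have hN0 : (n:ℝ) ≠ 0 := by linarith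
  have hj : n - 2 = (n - 3) + 1 := by omega
  have hjc : ((n - 3 : ℕ):ℝ) = (n:ℝ) - 3 := by
    have h3 : (3:ℕ) ≤ n := by omega
    push_cast [Nat.cast_sub h3]
    ring
  have hjN : ((n - 3 : ℕ):ℝ) + 3 = (n:ℝ) := by rw [hjc]; ring
  have hj5 : ((n - 3 : ℕ):ℝ) + 5 = (n:ℝ) + 2 := by rw [hjc]; ring
  -- basic positivity
  have hA : 0 < σ ^ 2 + ((n:ℝ) - 1) := by nlinarith [pow_pos hσ 2]
  have e2 : (σ ^ 2 + ((n:ℝ) - 1)) ^ ((n:ℝ)/2 - 1)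
      = (σ ^ 2 + ((n:ℝ) - 1)) ^ ((n:ℝ)/2 - 2) * (σ ^ 2 + ((n:ℝ) - 1)) := by
    rw [show (n:ℝ)/2 - 1 = ((n:ℝ)/2 - 2) + 1 by ring, Real.rpow_add_one hA.ne']
  have e3 : (σ ^ 2 + ((n:ℝ) - 1)) ^ ((n:ℝ)/2 - 2)
      = (σ ^ 2 + ((n:ℝ) - 1)) ^ ((n:ℝ)/2 - 3) * (σ ^ 2 + ((n:ℝ) - 1)) := by
    rw [show (n:ℝ)/2 - 2 = ((n:ℝ)/2 - 3) + 1 by ring, Real.rpow_add_one hA.ne']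
  have e4 : (σ ^ 2 + ((n:ℝ) - 1)) ^ ((n:ℝ)/2 - 3)
      = (σ ^ 2 + ((n:ℝ) - 1)) ^ ((n:ℝ)/2 - 4) * (σ ^ 2 + ((n:ℝ) - 1)) := by
    rw [show (n:ℝ)/2 - 3 = ((n:ℝ)/2 - 4) + 1 by ring, Real.rpow_add_one hA.ne']
  have hApow2 : 0 < (σ ^ 2 + ((n:ℝ) - 1)) ^ ((n:ℝ)/2 - 2) := Real.rpow_pos_of_pos hA _
  have hApow4 : 0 < (σ ^ 2 + ((n:ℝ) - 1)) ^ ((n:ℝ)/2 - 4) := Real.rpow_pos_of_pos hA _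
  have hW : 0 < ∫ θ in (0:ℝ)..π, Real.sin θ ^ ((n - 3) + 1) := integral_sin_pow_pos _
  -- the derivative level functions
  have hball14 : (0:ℝ) < 4⁻¹ := by norm_num
  have hD01 : ∀ x ∈ ball (1:ℝ) 4⁻¹,
      HasDerivAt (fun l => ∫ θ in (0:ℝ)..π, ff0 σ (n:ℝ) (n-2) l θ)
        (∫ θ in (0:ℝ)..π, ff1 σ (n:ℝ) (n-2) x θ) x := fun x hx =>
    step _ _ (contOn_ff0 hσ0 hN1 (n-2)) (contOn_ff1 hσ0 hN1 (n-2))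
      (fun l h1 _ θ => hasDerivAt_ff0 hσ0 hN1 (n-2) (by linarith) θ) hx
  have hD12 : ∀ x ∈ ball (1:ℝ) 4⁻¹,
      HasDerivAt (fun l => ∫ θ in (0:ℝ)..π, ff1 σ (n:ℝ) (n-2) l θ)
        (∫ θ in (0:ℝ)..π, ff2 σ (n:ℝ) (n-2) x θ) x := fun x hx =>
    step _ _ (contOn_ff1 hσ0 hN1 (n-2)) (contOn_ff2 hσ0 hN1 (n-2))
      (fun l h1 _ θ => hasDerivAt_ff1 hσ0 hN1 (n-2) (by linarith) θ) hx
  have hD23 : ∀ x ∈ ball (1:ℝ) 4⁻¹,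
      HasDerivAt (fun l => ∫ θ in (0:ℝ)..π, ff2 σ (n:ℝ) (n-2) l θ)
        (∫ θ in (0:ℝ)..π, ff3 σ (n:ℝ) (n-2) x θ) x := fun x hx =>
    step _ _ (contOn_ff2 hσ0 hN1 (n-2)) (contOn_ff3 hσ0 hN1 (n-2))
      (fun l h1 _ θ => hasDerivAt_ff2 hσ0 hN1 (n-2) (by linarith) θ) hx
  have hD34 : ∀ x ∈ ball (1:ℝ) 4⁻¹,
      HasDerivAt (fun l => ∫ θ in (0:ℝ)..π, ff3 σ (n:ℝ) (n-2) l θ)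
        (∫ θ in (0:ℝ)..π, ff4 σ (n:ℝ) (n-2) x θ) x := fun x hx =>
    step _ _ (contOn_ff3 hσ0 hN1 (n-2)) (contOn_ff4 hσ0 hN1 (n-2))
      (fun l h1 _ θ => hasDerivAt_ff3 hσ0 hN1 (n-2) (by linarith) θ) hx
  have hball_pos : ∀ x ∈ ball (1:ℝ) 4⁻¹, (0:ℝ) < x := by
    intro x hx
    rw [mem_ball, Real.dist_eq] at hx
    have := abs_lt.mp hx
    linarith [this.1]
  have hFeq : ∀ l, 0 < l → F l = ∫ θ in (0:ℝ)..π, ff0 σ (n:ℝ) (n-2) l θ := by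
    intro l hl
    rw [hF l hl]
    unfold S16.ff0 S16.g0 S16.Bf S16.w0 S16.dd
    rfl
  have hDF : ∀ x ∈ ball (1:ℝ) 4⁻¹,
      HasDerivAt F (∫ θ in (0:ℝ)..π, ff1 σ (n:ℝ) (n-2) x θ) x := by
    intro x hx
    refine (hD01 x hx).congr_of_eventuallyEq ?_
    filter_upwards [Ioi_mem_nhds (hball_pos x hx)] with y hy
    exact hFeq y hy
  have h1ball : (1:ℝ) ∈ ball (1:ℝ) 4⁻¹ := mem_ball_self hball14
  -- values at 1
  have hΦ1one : (∫ θ in (0:ℝ)..π, ff1 σ (n:ℝ) (n-2) 1 θ) = 0 := by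
    simp only [hj]
    exact phi1_one σ (n:ℝ) (n - 3)
  have hΦ2one : (∫ θ in (0:ℝ)..π, ff2 σ (n:ℝ) (n-2) 1 θ)
      = (((n:ℝ) - 1) * (σ ^ 2 + ((n:ℝ) - 1)) ^ ((n:ℝ)/2 - 2)
          * ∫ θ in (0:ℝ)..π, Real.sin θ ^ ((n - 3) + 1))
        * (((n:ℝ) - 1) - ((n:ℝ) - 3) * σ ^ 2) := by
    simp only [hj]
    rw [phi2_one σ (n:ℝ) (n - 3), g1_one, g2_one, e2, hjN]
    field_simp
    ring
  have hP2 : 0 < ((n:ℝ) - 1) * (σ ^ 2 + ((n:ℝ) - 1)) ^ ((n:ℝ)/2 - 2)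
      * ∫ θ in (0:ℝ)..π, Real.sin θ ^ ((n - 3) + 1) :=
    mul_pos (mul_pos (by linarith) hApow2) hW
  have d2iff : (∫ θ in (0:ℝ)..π, ff2 σ (n:ℝ) (n-2) 1 θ) < 0
      ↔ ((n:ℝ) - 3) * σ ^ 2 > (n:ℝ) - 1 := by
    rw [hΦ2one]
    constructor
    · intro h
      by_contra hc
      push_neg at hc
      have hX : 0 ≤ ((n:ℝ) - 1) - ((n:ℝ) - 3) * σ ^ 2 := by linarith
      nlinarith
    · intro h
      exact mul_neg_of_pos_of_neg hP2 (by linarith)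
  -- Icc inclusion helpers
  have hIccR : ∀ b : ℝ, b ≤ 9/8 → Icc (1:ℝ) b ⊆ ball (1:ℝ) 4⁻¹ := by
    intro b hb x hx
    rw [mem_ball, Real.dist_eq, abs_of_nonneg (by linarith [hx.1])]
    linarith [hx.2]
  have hIccL : ∀ a : ℝ, 7/8 ≤ a → Icc a (1:ℝ) ⊆ ball (1:ℝ) 4⁻¹ := by
    intro a ha x hx
    rw [mem_ball, Real.dist_eq, abs_of_nonpos (by linarith [hx.2])]
    linarith [hx.1]
  refine ⟨fun l => ∫ θ in (0:ℝ)..π, ff1 σ (n:ℝ) (n-2) l θ, ?_, hΦ1one,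
    ⟨∫ θ in (0:ℝ)..π, ff2 σ (n:ℝ) (n-2) 1 θ, hD12 1 h1ball, d2iff⟩, ?_⟩
  · filter_upwards [ball_mem_nhds (1:ℝ) hball14] with x hx
    exact hDF x hx
  constructor
  · -- eventual max ⇒ sqrt < σ
    intro hev
    by_contra hns
    push_neg at hns
    have hσ2 : σ ^ 2 ≤ ((n:ℝ) - 1) / ((n:ℝ) - 3) :=
      (Real.le_sqrt hσ.le (div_nonneg (by linarith) (by linarith))).mp hns
    have hle : ((n:ℝ) - 3) * σ ^ 2 ≤ (n:ℝ) - 1 := by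
      rw [le_div_iff₀ (by linarith : (0:ℝ) < (n:ℝ) - 3)] at hσ2
      linarith
    have hd2ge : 0 ≤ ∫ θ in (0:ℝ)..π, ff2 σ (n:ℝ) (n-2) 1 θ := by
      by_contra h
      push_neg at h
      have := d2iff.mp h
      linarith
    have hkey : ∃ b : ℝ, 1 < b ∧ b ≤ 9/8 ∧ ∀ x ∈ Ioo (1:ℝ) b, F 1 < F x := by
      rcases eq_or_lt_of_le hd2ge with hd2eq | hd2pos
      · -- boundary case
        have hX0 : ((n:ℝ) - 1) - ((n:ℝ) - 3) * σ ^ 2 = 0 := by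
          have h0 : (((n:ℝ) - 1) * (σ ^ 2 + ((n:ℝ) - 1)) ^ ((n:ℝ)/2 - 2)
              * ∫ θ in (0:ℝ)..π, Real.sin θ ^ ((n - 3) + 1))
            * (((n:ℝ) - 1) - ((n:ℝ) - 3) * σ ^ 2) = 0 := by rw [← hΦ2one, ← hd2eq]
          rcases mul_eq_zero.mp h0 with h | h
          · exact absurd h hP2.ne'
          · exact h
        have hb3 : ((n:ℝ) - 3) * σ ^ 2 = (n:ℝ) - 1 := by linarith
        -- Φ3 1 = 0
        have hΦ3one : (∫ θ in (0:ℝ)..π, ff3 σ (n:ℝ) (n-2) 1 θ) = 0 := by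
          have : (∫ θ in (0:ℝ)..π, ff3 σ (n:ℝ) (n-2) 1 θ)
              = ((-3) * (((n:ℝ) - 1) * (σ ^ 2 + ((n:ℝ) - 1)) ^ ((n:ℝ)/2 - 2)
                  * ∫ θ in (0:ℝ)..π, Real.sin θ ^ ((n - 3) + 1)))
                * (((n:ℝ) - 1) - ((n:ℝ) - 3) * σ ^ 2) := by
            simp only [hj]
            rw [phi3_one σ (n:ℝ) (n - 3), g1_one, g2_one, e2, hjN]
            field_simp
            ring
          rw [this, hX0, mul_zero]
        -- Φ4 1 > 0
        have hc4eq : (∫ θ in (0:ℝ)..π, ff4 σ (n:ℝ) (n-2) 1 θ) * ((n:ℝ) * ((n:ℝ) + 2))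
            = ((∫ θ in (0:ℝ)..π, Real.sin θ ^ ((n - 3) + 1))
                * (σ ^ 2 + ((n:ℝ) - 1)) ^ ((n:ℝ)/2 - 4))
              * (12*(n:ℝ)^6 - 24*(n:ℝ)^5 - 24*(n:ℝ)^4 + 96*(n:ℝ)^3 - 84*(n:ℝ)^2 + 24*(n:ℝ)
                + σ^2 * (-9*(n:ℝ)^6 + 54*(n:ℝ)^5 + 18*(n:ℝ)^4 - 288*(n:ℝ)^3 + 351*(n:ℝ)^2
                    - 126*(n:ℝ))
                + σ^4 * (3*(n:ℝ)^6 - 54*(n:ℝ)^5 + 213*(n:ℝ)^4 - 192*(n:ℝ)^3 - 54*(n:ℝ)^2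
                    + 84*(n:ℝ))
                + σ^6 * (-3*(n:ℝ)^4 - 30*(n:ℝ)^3 + 159*(n:ℝ)^2 - 126*(n:ℝ))) := by
          simp only [hj]
          rw [phi4_one σ (n:ℝ) (n - 3), g1_one, g2_one, g3_one, g4_one, e2, e3, e4, hjN, hj5]
          have hN2 : (n:ℝ) + 2 ≠ 0 := by linarith
          field_simp
          ring
        have hQpos : 0 < 12*(n:ℝ)^6 - 24*(n:ℝ)^5 - 24*(n:ℝ)^4 + 96*(n:ℝ)^3 - 84*(n:ℝ)^2 + 24*(n:ℝ)
            + σ^2 * (-9*(n:ℝ)^6 + 54*(n:ℝ)^5 + 18*(n:ℝ)^4 - 288*(n:ℝ)^3 + 351*(n:ℝ)^2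
                - 126*(n:ℝ))
            + σ^4 * (3*(n:ℝ)^6 - 54*(n:ℝ)^5 + 213*(n:ℝ)^4 - 192*(n:ℝ)^3 - 54*(n:ℝ)^2
                + 84*(n:ℝ))
            + σ^6 * (-3*(n:ℝ)^4 - 30*(n:ℝ)^3 + 159*(n:ℝ)^2 - 126*(n:ℝ)) := by
          have hid : ((n:ℝ) - 3)^3 * (12*(n:ℝ)^6 - 24*(n:ℝ)^5 - 24*(n:ℝ)^4 + 96*(n:ℝ)^3
                - 84*(n:ℝ)^2 + 24*(n:ℝ)
              + σ^2 * (-9*(n:ℝ)^6 + 54*(n:ℝ)^5 + 18*(n:ℝ)^4 - 288*(n:ℝ)^3 + 351*(n:ℝ)^2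
                  - 126*(n:ℝ))
              + σ^4 * (3*(n:ℝ)^6 - 54*(n:ℝ)^5 + 213*(n:ℝ)^4 - 192*(n:ℝ)^3 - 54*(n:ℝ)^2
                  + 84*(n:ℝ))
              + σ^6 * (-3*(n:ℝ)^4 - 30*(n:ℝ)^3 + 159*(n:ℝ)^2 - 126*(n:ℝ)))
              = 6*(n:ℝ)*((n:ℝ)-1)^4*((n:ℝ)-3)*((n:ℝ)-2)*((n:ℝ)^2 - 5*(n:ℝ) + 10) := by
            linear_combination ((-1008*(n:ℝ) + 3828*(n:ℝ)^2 - 5574*(n:ℝ)^3 + 3810*(n:ℝ)^4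
                - 1140*(n:ℝ)^5 + 48*(n:ℝ)^6 + 42*(n:ℝ)^7 - 6*(n:ℝ)^8)
              + σ^2 * (378*(n:ℝ) - 9*(n:ℝ)^2 - 2172*(n:ℝ)^3 + 3285*(n:ℝ)^4 - 1974*(n:ℝ)^5
                  + 561*(n:ℝ)^6 - 72*(n:ℝ)^7 + 3*(n:ℝ)^8)
              + σ^4 * (-1134*(n:ℝ) + 2187*(n:ℝ)^2 - 1350*(n:ℝ)^3 + 312*(n:ℝ)^4 - 12*(n:ℝ)^5
                  - 3*(n:ℝ)^6)) * hb3
          have hrhs : 0 < 6*(n:ℝ)*((n:ℝ)-1)^4*((n:ℝ)-3)*((n:ℝ)-2)*((n:ℝ)^2 - 5*(n:ℝ) + 10) := by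
            have h10 : 0 < (n:ℝ)^2 - 5*(n:ℝ) + 10 := by nlinarith [sq_nonneg (2*(n:ℝ) - 5)]
            exact mul_pos (mul_pos (mul_pos (mul_pos (by linarith : (0:ℝ) < 6*(n:ℝ))
              (pow_pos (by linarith : (0:ℝ) < (n:ℝ)-1) 4)) (by linarith)) (by linarith)) h10
          have h3cube : 0 < ((n:ℝ) - 3)^3 := pow_pos (by linarith) 3
          have h := hrhs
          rw [← hid] at h
          rcases mul_pos_iff.mp h with ⟨_, hq⟩ | ⟨hc, _⟩
          · exact hq
          · linarith
        have hc4pos : 0 < ∫ θ in (0:ℝ)..π, ff4 σ (n:ℝ) (n-2) 1 θ := by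
          have hNN2 : 0 < (n:ℝ) * ((n:ℝ) + 2) := by nlinarith
          have h := mul_pos (mul_pos hW hApow4) hQpos
          rw [← hc4eq] at h
          rcases mul_pos_iff.mp h with ⟨h1, _⟩ | ⟨_, h2⟩
          · exact h1
          · linarith
        -- cascade
        obtain ⟨u, hu1, hu⟩ := mem_nhdsGT_iff_exists_Ioo_subset.mp
          (ev_pos_right (hD34 1 h1ball) hΦ3one hc4pos)
        refine ⟨min u (9/8), lt_min hu1 (by norm_num), min_le_right _ _, ?_⟩
        have hb1 : (1:ℝ) < min u (9/8) := lt_min hu1 (by norm_num)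
        have hsubball : Icc (1:ℝ) (min u (9/8)) ⊆ ball (1:ℝ) 4⁻¹ :=
          hIccR _ (min_le_right _ _)
        have hΦ3pos : ∀ x ∈ Ioo (1:ℝ) (min u (9/8)),
            0 < ∫ θ in (0:ℝ)..π, ff3 σ (n:ℝ) (n-2) x θ := fun x hx =>
          hu ⟨hx.1, lt_of_lt_of_le hx.2 (min_le_left _ _)⟩
        have hΦ2pos : ∀ x ∈ Ioo (1:ℝ) (min u (9/8)),
            0 < ∫ θ in (0:ℝ)..π, ff2 σ (n:ℝ) (n-2) x θ := by
          have hsm := strictMonoOn_Icc hb1 (fun x hx => hD23 x (hsubball hx)) hΦ3pos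
          intro x hx
          have := hsm ⟨le_refl 1, hb1.le⟩ ⟨hx.1.le, hx.2.le⟩ hx.1
          simp only [] at this
          linarith [hd2eq, this]
        have hΦ1pos : ∀ x ∈ Ioo (1:ℝ) (min u (9/8)),
            0 < ∫ θ in (0:ℝ)..π, ff1 σ (n:ℝ) (n-2) x θ := by
          have hsm := strictMonoOn_Icc hb1 (fun x hx => hD12 x (hsubball hx)) hΦ2pos
          intro x hx
          have := hsm ⟨le_refl 1, hb1.le⟩ ⟨hx.1.le, hx.2.le⟩ hx.1
          simp only [] at this
          rw [hΦ1one] at this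
          linarith
        have hsm := strictMonoOn_Icc hb1 (fun x hx => hDF x (hsubball hx)) hΦ1pos
        intro x hx
        exact hsm ⟨le_refl 1, hb1.le⟩ ⟨hx.1.le, hx.2.le⟩ hx.1
      · -- d2 > 0 case
        obtain ⟨u, hu1, hu⟩ := mem_nhdsGT_iff_exists_Ioo_subset.mp
          (ev_pos_right (hD12 1 h1ball) hΦ1one hd2pos)
        refine ⟨min u (9/8), lt_min hu1 (by norm_num), min_le_right _ _, ?_⟩
        have hb1 : (1:ℝ) < min u (9/8) := lt_min hu1 (by norm_num)
        have hsubball : Icc (1:ℝ) (min u (9/8)) ⊆ ball (1:ℝ) 4⁻¹ :=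
          hIccR _ (min_le_right _ _)
        have hΦ1pos : ∀ x ∈ Ioo (1:ℝ) (min u (9/8)),
            0 < ∫ θ in (0:ℝ)..π, ff1 σ (n:ℝ) (n-2) x θ := fun x hx =>
          hu ⟨hx.1, lt_of_lt_of_le hx.2 (min_le_left _ _)⟩
        have hsm := strictMonoOn_Icc hb1 (fun x hx => hDF x (hsubball hx)) hΦ1pos
        intro x hx
        exact hsm ⟨le_refl 1, hb1.le⟩ ⟨hx.1.le, hx.2.le⟩ hx.1
    obtain ⟨b, hb1, _, hbF⟩ := hkey
    have h1 : ∀ᶠ x in 𝓝[>] (1:ℝ), F x < F 1 :=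
      hev.filter_mono (nhdsWithin_mono _ (fun x hx => ne_of_gt hx))
    have h2 : Ioo (1:ℝ) b ∈ 𝓝[>] (1:ℝ) := Ioo_mem_nhdsGT_of_mem ⟨le_refl 1, hb1⟩
    obtain ⟨x, hx1, hx2⟩ := (h1.and h2).exists
    exact absurd (hbF x hx2) (by linarith)
  · -- sqrt < σ ⇒ eventual max
    intro hsq
    have hgt : (n:ℝ) - 1 < ((n:ℝ) - 3) * σ ^ 2 := by
      have := (Real.sqrt_lt' hσ).mp hsq
      rw [div_lt_iff₀ (by linarith : (0:ℝ) < (n:ℝ) - 3)] at this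
      linarith
    have hd2neg : (∫ θ in (0:ℝ)..π, ff2 σ (n:ℝ) (n-2) 1 θ) < 0 := d2iff.mpr hgt
    obtain ⟨u, hu1, hu⟩ := mem_nhdsGT_iff_exists_Ioo_subset.mp
      (ev_neg_right (hD12 1 h1ball) hΦ1one hd2neg)
    obtain ⟨v, hv1, hv⟩ := mem_nhdsLT_iff_exists_Ioo_subset.mp
      (ev_pos_left (hD12 1 h1ball) hΦ1one hd2neg)
    set b := min u (9/8) with hbdef
    set a := max v (7/8) with hadef
    have hb1 : (1:ℝ) < b := lt_min hu1 (by norm_num)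
    have ha1 : a < 1 := max_lt hv1 (by norm_num)
    have hsubR : Icc (1:ℝ) b ⊆ ball (1:ℝ) 4⁻¹ := hIccR _ (min_le_right _ _)
    have hsubL : Icc a (1:ℝ) ⊆ ball (1:ℝ) 4⁻¹ := hIccL _ (le_max_right _ _)
    have hanti := strictAntiOn_Icc hb1 (fun x hx => hDF x (hsubR hx))
      (fun x hx => hu ⟨hx.1, lt_of_lt_of_le hx.2 (min_le_left _ _)⟩)
    have hmono := strictMonoOn_Icc ha1 (fun x hx => hDF x (hsubL hx))
      (fun x hx => hv ⟨lt_of_le_of_lt (le_max_left _ _) hx.1, hx.2⟩)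
    rw [eventually_nhdsWithin_iff]
    filter_upwards [Ioo_mem_nhds ha1 hb1] with x hx hxne
    have hne : x ≠ 1 := by simpa [Set.mem_compl_singleton_iff] using hxne
    rcases lt_or_gt_of_ne hne with hlt | hgt'
    · exact hmono ⟨hx.1.le, hlt.le⟩ ⟨ha1.le, le_refl 1⟩ hlt
    · exact hanti ⟨le_refl 1, hb1.le⟩ ⟨hgt'.le, hx.2.le⟩ hgt'
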